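/- Fix a function A : F → F on a finite set F with no fixed points, and a subset T ⊆ F. Let B be the set of 2r-tuples y ∈ T^{2r} such that for each index i ∈ {1,…,2r} there exists an index j ≠ i with y_i = y_j or y_i = A(y_j). Then |B| ≤ (2r)^{4r} · |T|^r. -/

import Mathlib

open Finset
open scoped Classical


private lemma cyc_mod {F : Type*} (p : F → F) (w : F) (c : ℕ) (hc : 0 < c)
    (hcyc : p^[c] w = w) : ∀ k, ∃ m < c, p^[k] w = p^[m] w := by
  intro k
  induction k using Nat.strong_induction_on with
  | _ k ih =>
    rcases lt_or_ge k c with h | h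
    · exact ⟨k, h, rfl⟩
    · have h1 : p^[k] w = p^[k - c] w := by
        conv_lhs => rw [show k = (k - c) + c by omega, Function.iterate_add_apply, hcyc]
      obtain ⟨m, hm, hm2⟩ := ih (k - c) (by omega)
      exact ⟨m, hm, h1.trans hm2⟩

lemma graph_lemma {F : Type*} [DecidableEq F] (p : F → F) (S : Finset F)
    (hp : ∀ v ∈ S, p v ≠ v) :
    ∃ R : Finset F, R ⊆ S ∧ 2 * R.card ≤ S.card ∧
      ∀ v ∈ S, ∃ n ≤ S.card, (∀ k < n, p^[k] v ∈ S \ R) ∧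
        (p^[n] v ∈ R ∨ p^[n] v ∉ S) := by
  classical
  set C : Finset F := S.filter (fun v => (∃ c, 0 < c ∧ p^[c] v = v) ∧ ∀ k, p^[k] v ∈ S)
    with hC
  set orbit : F → Finset F := fun v => S.filter (fun w => ∃ k, p^[k] v = w) with horb
  set rep : F → F := fun v => ((orbit v).toList).headD v with hrep
  have hrepD : ∀ (v w : F), v ∈ S → orbit v = orbit w → rep v = rep w := by
    intro v w hv h
    have hvo : v ∈ orbit w := by rw [← h]; simp [horb, hv]; exact ⟨0, rfl⟩
    have hne : (orbit w).toList ≠ [] := by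
      simp only [ne_eq, Finset.toList_eq_nil]
      exact Finset.ne_empty_of_mem hvo
    simp only [hrep, h]
    rcases hl : (orbit w).toList with _ | ⟨a, l⟩
    · exact absurd hl hne
    · simp
  have hrep_mem : ∀ v ∈ S, rep v ∈ orbit v := by
    intro v hv
    have hvo : v ∈ orbit v := by simp [horb, hv]; exact ⟨0, rfl⟩
    have hne : (orbit v).toList ≠ [] := by
      simp [Finset.toList_eq_nil]
      exact Finset.ne_empty_of_mem hvo
    have : ((orbit v).toList).headD v ∈ (orbit v).toList := by
      rcases hl : (orbit v).toList with _ | ⟨a, l⟩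
      · exact absurd hl hne
      · simp
    rw [Finset.mem_toList] at this
    exact this
  set R : Finset F := C.image rep with hR
  -- membership facts
  have hCS : C ⊆ S := Finset.filter_subset _ _
  have horbS : ∀ v, orbit v ⊆ S := fun v => Finset.filter_subset _ _
  have hRS : R ⊆ S := by
    intro u hu
    rw [hR, Finset.mem_image] at hu
    obtain ⟨v, hv, rfl⟩ := hu
    exact horbS v (hrep_mem v (hCS hv))
  -- orbit invariance
  have horbit_eq : ∀ v ∈ C, ∀ k, orbit (p^[k] v) = orbit v ∧ p^[k] v ∈ C := by
    intro v hv k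
    rw [hC, Finset.mem_filter] at hv
    obtain ⟨hvS, ⟨c, hc, hcyc⟩, hall⟩ := hv
    have hct : ∀ t, p^[c * t] v = v := by
      intro t
      induction t with
      | zero => simp
      | succ t iht => rw [Nat.mul_succ, Function.iterate_add_apply, hcyc, iht]
    set w := p^[k] v with hw
    have hback : p^[c * (k + 1) - k] w = v := by
      rw [hw, ← Function.iterate_add_apply, show c * (k+1) - k + k = c * (k+1) by
        have : k + 1 ≤ c * (k + 1) := Nat.le_mul_of_pos_left _ hc
        omega, hct]
    have horbeq : orbit w = orbit v := by
      apply Finset.Subset.antisymm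
      · intro x hx
        rw [horb, Finset.mem_filter] at hx ⊢
        obtain ⟨hxS, m, hm⟩ := hx
        exact ⟨hxS, m + k, by rw [Function.iterate_add_apply, ← hw, hm]⟩
      · intro x hx
        rw [horb, Finset.mem_filter] at hx ⊢
        obtain ⟨hxS, m, hm⟩ := hx
        exact ⟨hxS, m + (c * (k+1) - k), by
          rw [Function.iterate_add_apply, hback, hm]⟩
    refine ⟨horbeq, ?_⟩
    rw [hC, Finset.mem_filter]
    refine ⟨hall k, ⟨c, hc, ?_⟩, fun m => by
      rw [hw, ← Function.iterate_add_apply]; exact hall (m + k)⟩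
    rw [hw, ← Function.iterate_add_apply, Nat.add_comm, Function.iterate_add_apply, hcyc]
  -- subclaim: no cycle avoiding R
  have hsub : ∀ (v : F) (i j : ℕ), i < j → p^[i] v = p^[j] v →
      (∀ m, i ≤ m → m < j → p^[m] v ∈ S \ R) → False := by
    intro v i j hij heq hmem
    set w := p^[i] v with hw
    have hcyc : p^[j - i] w = w := by
      rw [hw, ← Function.iterate_add_apply, show j - i + i = j by omega, ← heq]
    have hmod := cyc_mod p w (j - i) (by omega) hcyc
    have hiter : ∀ k, p^[k] w ∈ S \ R := by
      intro k
      obtain ⟨m, hm, hm2⟩ := hmod k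
      rw [hm2, hw, ← Function.iterate_add_apply]
      exact hmem (m + i) (by omega) (by omega)
    have hwC : w ∈ C := by
      rw [hC, Finset.mem_filter]
      refine ⟨Finset.mem_sdiff.1 (hiter 0) |>.1 |> (by simpa using ·), ⟨j - i, by omega, hcyc⟩,
        fun k => (Finset.mem_sdiff.1 (hiter k)).1⟩
    have hrw : rep w ∈ R := by
      rw [hR]; exact Finset.mem_image_of_mem rep hwC
    have := hrep_mem w (hCS hwC)
    rw [horb, Finset.mem_filter] at this
    obtain ⟨-, k, hk⟩ := this
    have := hiter k
    rw [hk] at this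
    exact (Finset.mem_sdiff.1 this).2 hrw
  refine ⟨R, hRS, ?_, ?_⟩
  · -- counting
    have h1 : 2 * R.card ≤ C.card := by
      rw [hR]
      apply Finset.mul_card_image_le_card
      intro b hb
      rw [Finset.mem_image] at hb
      obtain ⟨v, hv, rfl⟩ := hb
      have hvS := hCS hv
      have hpv : p v ∈ C ∧ rep (p v) = rep v := by
        have := horbit_eq v hv 1
        simp only [Function.iterate_one] at this
        exact ⟨this.2, hrepD _ _ (hCS this.2) this.1⟩
      have hsubset : {v, p v} ⊆ C.filter (fun a => rep a = rep v) := by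
        intro x hx
        rcases Finset.mem_insert.1 hx with rfl | hx
        · exact Finset.mem_filter.2 ⟨hv, rfl⟩
        · rw [Finset.mem_singleton] at hx
          subst hx
          exact Finset.mem_filter.2 ⟨hpv.1, hpv.2⟩
      calc 2 = ({v, p v} : Finset F).card := by
              rw [Finset.card_pair (Ne.symm (hp v hvS))]
        _ ≤ _ := Finset.card_le_card hsubset
    exact h1.trans (Finset.card_le_card hCS)
  · -- reachability
    intro v hv
    have hex : ∃ n, p^[n] v ∈ R ∨ p^[n] v ∉ S := by
      by_contra hcon
      push_neg at hcon
      have hall : ∀ n, p^[n] v ∈ S \ R :=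
        fun n => Finset.mem_sdiff.2 ⟨(hcon n).2, (hcon n).1⟩
      obtain ⟨i, hi, j, hj, hne, hfeq⟩ :=
        Finset.exists_ne_map_eq_of_card_lt_of_maps_to
          (s := Finset.range (S.card + 1)) (t := S \ R)
          (by
            have := Finset.card_le_card (Finset.sdiff_subset (s := S) (t := R))
            simp only [Finset.card_range]; omega)
          (f := fun k => p^[k] v) (fun k _ => hall k)
      rcases Nat.lt_or_ge i j with h | h
      · exact hsub v i j h hfeq (fun m _ _ => hall m)
      · exact hsub v j i (by omega) hfeq.symm (fun m _ _ => hall m)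
    set n := Nat.find hex with hn
    have hspec := Nat.find_spec hex
    have hmin : ∀ k < n, p^[k] v ∈ S \ R := by
      intro k hk
      have := Nat.find_min hex hk
      push_neg at this
      exact Finset.mem_sdiff.2 ⟨this.2, this.1⟩
    refine ⟨n, ?_, hmin, hspec⟩
    by_contra hbig
    push_neg at hbig
    obtain ⟨i, hi, j, hj, hne, hfeq⟩ :=
      Finset.exists_ne_map_eq_of_card_lt_of_maps_to
        (s := Finset.range (S.card + 1)) (t := S \ R)
        (by
          have := Finset.card_le_card (Finset.sdiff_subset (s := S) (t := R))
          simp only [Finset.card_range]; omega)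
        (f := fun k => p^[k] v)
        (fun k hk => hmin k (by rw [Finset.mem_coe, Finset.mem_range] at hk; omega))
    rw [Finset.mem_range] at hi hj
    rcases Nat.lt_or_ge i j with h | h
    · exact hsub v i j h hfeq (fun m _ hm => hmin m (by omega))
    · exact hsub v j i (by omega) hfeq.symm (fun m _ hm => hmin m (by omega))

lemma key_lemma {F : Type*} [Fintype F] [DecidableEq F]
    (A : F → F) (hA : ∀ y, A y ≠ y) (T : Finset F) (r : ℕ) (hr : 1 ≤ r)
    (y : Fin (2 * r) → F) (hy1 : ∀ i, y i ∈ T)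
    (hy2 : ∀ i, ∃ j, j ≠ i ∧ (y i = y j ∨ y i = A (y j))) :
    ∃ z : (Fin r → F) × (Fin (2 * r) → Fin r × Fin (4 * r)),
      (∀ k, z.1 k ∈ T) ∧ ∀ i, y i = A^[((z.2 i).2 : ℕ)] (z.1 (z.2 i).1) := by
  classical
  set V : Finset F := Finset.image y Finset.univ with hV
  have hVT : ∀ v ∈ V, v ∈ T := by
    intro v hv
    rw [hV, Finset.mem_image] at hv
    obtain ⟨i, -, rfl⟩ := hv
    exact hy1 i
  set mult : F → ℕ := fun v => (Finset.univ.filter fun i => y i = v).card with hmult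
  set M : Finset F := V.filter (fun v => 2 ≤ mult v) with hM
  set S : Finset F := V \ M with hS
  have hMV : M ⊆ V := Finset.filter_subset _ _
  have hSV : S ⊆ V := Finset.sdiff_subset
  have hmult_pos : ∀ v ∈ V, 1 ≤ mult v := by
    intro v hv
    rw [hV, Finset.mem_image] at hv
    obtain ⟨i, -, rfl⟩ := hv
    have : i ∈ Finset.univ.filter fun j => y j = y i := by simp
    exact Finset.card_pos.2 ⟨i, this⟩
  have hmult1 : ∀ v ∈ S, mult v = 1 := by
    intro v hv
    rw [hS, Finset.mem_sdiff, hM, Finset.mem_filter] at hv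
    have := hmult_pos v hv.1
    have h2 := hv.2
    push_neg at h2
    have := h2 hv.1
    omega
  -- counting
  have hcount : 2 * M.card + S.card ≤ 2 * r := by
    have hsum : ∑ v ∈ V, mult v = 2 * r := by
      have := Finset.card_eq_sum_card_image y (Finset.univ : Finset (Fin (2 * r)))
      simp only [Finset.card_univ, Fintype.card_fin] at this
      exact this.symm
    have hsplit : ∑ v ∈ S, mult v + ∑ v ∈ M, mult v = ∑ v ∈ V, mult v := by
      rw [hS]
      exact Finset.sum_sdiff hMV
    have hMsum : 2 * M.card ≤ ∑ v ∈ M, mult v := by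
      rw [Nat.mul_comm, ← Finset.sum_const_nat fun v hv => rfl]
      · exact Finset.sum_le_sum fun v hv => (Finset.mem_filter.1 hv).2
    have hSsum : ∑ v ∈ S, mult v = S.card := by
      rw [Finset.sum_congr rfl hmult1]
      simp
    omega
  -- predecessor function
  set p : F → F := fun v => if h : ∃ w, w ∈ V ∧ v = A w then h.choose else v with hp
  have hpS : ∀ v ∈ S, p v ∈ V ∧ v = A (p v) := by
    intro v hv
    have hex : ∃ w, w ∈ V ∧ v = A w := by
      have hvV := hSV hv
      rw [hV, Finset.mem_image] at hvV
      obtain ⟨i, -, rfl⟩ := hvV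
      obtain ⟨j, hji, hor⟩ := hy2 i
      rcases hor with h | h
      · exfalso
        have : ({j, i} : Finset (Fin (2 * r))) ⊆ Finset.univ.filter fun k => y k = y i := by
          intro x hx
          rcases Finset.mem_insert.1 hx with rfl | hx
          · simp [h.symm]
          · rw [Finset.mem_singleton] at hx; subst hx; simp
        have hc : 2 ≤ mult (y i) := by
          calc 2 = ({j, i} : Finset (Fin (2 * r))).card := (Finset.card_pair hji).symm
            _ ≤ _ := Finset.card_le_card this
        have := hmult1 _ hv
        omega
      · exact ⟨y j, by rw [hV]; exact ⟨Finset.mem_image_of_mem y (Finset.mem_univ j), h⟩⟩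
    rw [hp]
    simp only [dif_pos hex]
    exact ⟨hex.choose_spec.1, hex.choose_spec.2⟩
  have hpne : ∀ v ∈ S, p v ≠ v := by
    intro v hv heq
    have := (hpS v hv).2
    rw [heq] at this
    exact hA v this.symm
  obtain ⟨R, hRS, hRcard, hreach⟩ := graph_lemma p S hpne
  set Roots : Finset F := M ∪ R with hRoots
  have hRootsT : ∀ u ∈ Roots, u ∈ T := by
    intro u hu
    rcases Finset.mem_union.1 hu with h | h
    · exact hVT u (hMV h)
    · exact hVT u (hSV (hRS h))
  have hRootscard : Roots.card ≤ r := by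
    have := Finset.card_union_le M R
    rw [hRoots]
    omega
  -- rho
  have h0 : 0 < 2 * r := by omega
  set t0 : F := y ⟨0, h0⟩ with ht0
  set L : List F := Roots.toList with hL
  have hLlen : L.length = Roots.card := Finset.length_toList _
  set ρ : Fin r → F := fun k => L.getD k t0 with hρ
  have hρT : ∀ k, ρ k ∈ T := by
    intro k
    show L.getD (k : ℕ) t0 ∈ T
    rcases lt_or_ge (k : ℕ) L.length with h | h
    · rw [List.getD_eq_getElem _ _ h]
      apply hRootsT
      rw [← Finset.mem_toList, ← hL]
      exact List.getElem_mem h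
    · rw [List.getD_eq_default _ _ h, ht0]
      exact hy1 _
  have hρsur : ∀ u ∈ Roots, ∃ k : Fin r, ρ k = u := by
    intro u hu
    have : u ∈ L := by rw [hL, Finset.mem_toList]; exact hu
    obtain ⟨m, hm, hmu⟩ := List.getElem_of_mem this
    refine ⟨⟨m, by omega⟩, ?_⟩
    show L.getD m t0 = u
    rw [List.getD_eq_getElem _ _ (by simpa using hm)]
    exact hmu
  -- chains
  have hScard : S.card ≤ 2 * r := by omega
  have reachA : ∀ v ∈ V, ∃ n < 4 * r, ∃ u ∈ Roots, v = A^[n] u := by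
    intro v hv
    by_cases hvM : v ∈ M
    · exact ⟨0, by omega, v, Finset.mem_union_left _ hvM, rfl⟩
    have hvS : v ∈ S := Finset.mem_sdiff.2 ⟨hv, hvM⟩
    obtain ⟨n, hn, hiter, hend⟩ := hreach v hvS
    have chain : ∀ k, k ≤ n → v = A^[k] (p^[k] v) := by
      intro k
      induction k with
      | zero => simp
      | succ k ih =>
        intro hk
        have hkS : p^[k] v ∈ S := by
          rcases Nat.eq_or_lt_of_le hk with h | h
          · exact (Finset.mem_sdiff.1 (hiter k (by omega))).1
          · exact (Finset.mem_sdiff.1 (hiter k (by omega))).1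
        calc v = A^[k] (p^[k] v) := ih (by omega)
          _ = A^[k] (A (p (p^[k] v))) := by rw [← (hpS _ hkS).2]
          _ = A^[k + 1] (p^[k + 1] v) := by
              rw [Function.iterate_succ_apply, Function.iterate_succ_apply']
    refine ⟨n, by omega, p^[n] v, ?_, chain n le_rfl⟩
    rcases hend with h | h
    · exact Finset.mem_union_right _ h
    · apply Finset.mem_union_left
      have hn1 : 1 ≤ n := by
        rcases Nat.eq_zero_or_pos n with rfl | h'
        · exact absurd hvS h
        · exact h'
      have hprev : p^[n - 1] v ∈ S := (Finset.mem_sdiff.1 (hiter (n - 1) (by omega))).1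
      have hmem : p^[n] v ∈ V := by
        have : p^[n] v = p (p^[n - 1] v) := by
          conv_lhs => rw [show n = (n - 1) + 1 by omega, Function.iterate_succ_apply']
        rw [this]
        exact (hpS _ hprev).1
      by_contra hnotM
      exact h (Finset.mem_sdiff.2 ⟨hmem, hnotM⟩)
  -- assemble
  have hall : ∀ i, ∃ q : Fin r × Fin (4 * r), y i = A^[(q.2 : ℕ)] (ρ q.1) := by
    intro i
    have hvV : y i ∈ V := by rw [hV]; exact Finset.mem_image_of_mem y (Finset.mem_univ i)
    obtain ⟨n, hn, u, hu, hnu⟩ := reachA (y i) hvV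
    obtain ⟨k, hk⟩ := hρsur u hu
    exact ⟨(k, ⟨n, hn⟩), by rw [hk]; exact hnu⟩
  exact ⟨⟨ρ, fun i => (hall i).choose⟩, hρT, fun i => (hall i).choose_spec⟩

/-- Fix a fixed-point-free function A : F → F on a finite set F and
T ⊆ F. Let B be the set of 2r-tuples y ∈ T^{2r} such that for each index i there is an
index j ≠ i with y_i = y_j or y_i = A(y_j). Then |B| ≤ (2r)^{4r} · |T|^r. -/
theorem stmt_11 {F : Type*} [Fintype F] [DecidableEq F]
    (A : F → F) (hA : ∀ y, A y ≠ y) (T : Finset F) (r : ℕ) (hr : 1 ≤ r) :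
    (Finset.univ.filter (fun y : Fin (2 * r) → F =>
        (∀ i, y i ∈ T) ∧
        ∀ i, ∃ j, j ≠ i ∧ (y i = y j ∨ y i = A (y j)))).card ≤
      (2 * r) ^ (4 * r) * T.card ^ r := by
  classical
  set B := Finset.univ.filter (fun y : Fin (2 * r) → F =>
      (∀ i, y i ∈ T) ∧
      ∀ i, ∃ j, j ≠ i ∧ (y i = y j ∨ y i = A (y j))) with hB
  rcases B.eq_empty_or_nonempty with h | ⟨y0, hy0⟩
  · rw [h]
    simp
  have hkey : ∀ y ∈ B, ∃ z : (Fin r → F) × (Fin (2 * r) → Fin r × Fin (4 * r)),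
      (∀ k, z.1 k ∈ T) ∧ ∀ i, y i = A^[((z.2 i).2 : ℕ)] (z.1 (z.2 i).1) := by
    intro y hy
    rw [hB, Finset.mem_filter] at hy
    exact key_lemma A hA T r hr y hy.2.1 hy.2.2
  haveI : Nonempty ((Fin r → F) × (Fin (2 * r) → Fin r × Fin (4 * r))) := by
    refine ⟨⟨fun _ => y0 ⟨0, by omega⟩, fun _ => (⟨0, by omega⟩, ⟨0, by omega⟩)⟩⟩
  set enc : (Fin (2 * r) → F) → (Fin r → F) × (Fin (2 * r) → Fin r × Fin (4 * r)) :=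
    fun y => if h : y ∈ B then (hkey y h).choose else Classical.arbitrary _ with henc
  have hspec : ∀ y (h : y ∈ B), (∀ k, (enc y).1 k ∈ T) ∧
      ∀ i, y i = A^[(((enc y).2 i).2 : ℕ)] ((enc y).1 ((enc y).2 i).1) := by
    intro y h
    rw [henc]
    simp only [dif_pos h]
    exact (hkey y h).choose_spec
  set target : Finset ((Fin r → F) × (Fin (2 * r) → Fin r × Fin (4 * r))) :=
    (Fintype.piFinset fun _ : Fin r => T) ×ˢ Finset.univ with htarget
  have hmaps : ∀ y ∈ B, enc y ∈ target := by
    intro y hy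
    rw [htarget, Finset.mem_product]
    refine ⟨?_, Finset.mem_univ _⟩
    rw [Fintype.mem_piFinset]
    exact (hspec y hy).1
  have hinj : Set.InjOn enc B := by
    intro y1 h1 y2 h2 heq
    funext i
    rw [(hspec y1 h1).2 i, (hspec y2 h2).2 i, heq]
  calc B.card ≤ target.card := Finset.card_le_card_of_injOn enc hmaps hinj
    _ = T.card ^ r * (r * (4 * r)) ^ (2 * r) := by
        rw [htarget, Finset.card_product, Fintype.card_piFinset_const,
          Finset.card_univ, Fintype.card_fun]
        simp [Fintype.card_prod]
    _ = (2 * r) ^ (4 * r) * T.card ^ r := by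
        rw [Nat.mul_comm (T.card ^ r)]
        congr 1
        rw [show r * (4 * r) = (2 * r) ^ 2 by ring, ← pow_mul,
          show 2 * (2 * r) = 4 * r by ring]
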